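/- Let V⁰, V¹ ∈ ℝ with V¹ − V⁰ = O(Δtʳ), let (ηᵐ) satisfy ηᵐ = 1 + O(Δtʳ), and define V̄^{m+1} by (3/2)V̄^{m+1} = 2Vᵐ − (1/2)V^{m−1} (so that V̄^{m+1} − Vᵐ = (1/3)(Vᵐ − V^{m−1})) and V^{m+1} = (η^{m+1})³ V̄^{m+1}. Then by induction V^{m+1} − Vᵐ = O(Δtʳ) for every fixed m as Δt → 0. -/
import Mathlib

/-- Approximate volume conservation for the LM-SAV-MD-BDF2 method. -/
theorem approx_volume_conservation_bdf2
    (r : ℕ) (hr : 1 ≤ r)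
    (V0 : ℝ)
    (V : ℝ → ℕ → ℝ) (η : ℝ → ℕ → ℝ)
    (hV0 : ∀ Δt, V Δt 0 = V0)
    (hinit : ∃ C : ℝ, ∀ Δt : ℝ, 0 < Δt → |V Δt 1 - V Δt 0| ≤ C * Δt ^ r)
    (hη : ∃ C : ℝ, ∀ Δt : ℝ, 0 < Δt → ∀ m : ℕ, |η Δt m - 1| ≤ C * Δt ^ r)
    (hrec : ∀ Δt : ℝ, 0 < Δt → ∀ m : ℕ,
      V Δt (m + 2) =
        (η Δt (m + 2)) ^ 3 * ((4 / 3) * V Δt (m + 1) - (1 / 3) * V Δt m))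
    (m : ℕ) :
    ∃ C' > 0, ∃ δ > 0, ∀ Δt : ℝ, 0 < Δt → Δt < δ →
      |V Δt (m + 1) - V Δt m| ≤ C' * Δt ^ r := by
  obtain ⟨C0, hC0⟩ := hinit
  obtain ⟨Cη, hCη⟩ := hη
  set K := |Cη| with hK
  have hK0 : 0 ≤ K := abs_nonneg _
  have hηK : ∀ Δt : ℝ, 0 < Δt → ∀ n : ℕ, |η Δt n - 1| ≤ K * Δt ^ r := by
    intro Δt hΔt n
    exact (hCη Δt hΔt n).trans (mul_le_mul_of_nonneg_right (le_abs_self _)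
      (le_of_lt (pow_pos hΔt r)))
  -- strengthened induction
  have main : ∀ m : ℕ, ∃ C' > 0, ∀ Δt : ℝ, 0 < Δt → Δt < 1 →
      |V Δt (m + 1) - V Δt m| ≤ C' * Δt ^ r ∧ |V Δt (m + 1)| ≤ C' := by
    intro m
    induction m with
    | zero =>
      refine ⟨|V0| + |C0| + 1, by positivity, ?_⟩
      intro Δt hΔt hΔt1
      simp only [Nat.zero_add]
      have hpow : Δt ^ r ≤ 1 := pow_le_one₀ hΔt.le hΔt1.le
      have hpow0 : 0 < Δt ^ r := pow_pos hΔt r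
      have h1 : |V Δt 1 - V Δt 0| ≤ |C0| * Δt ^ r :=
        (hC0 Δt hΔt).trans (mul_le_mul_of_nonneg_right (le_abs_self _) hpow0.le)
      constructor
      · refine h1.trans (mul_le_mul_of_nonneg_right ?_ hpow0.le)
        have := abs_nonneg V0
        linarith
      · have h2 : |V Δt 1| - |V Δt 0| ≤ |V Δt 1 - V Δt 0| :=
          abs_sub_abs_le_abs_sub (V Δt 1) (V Δt 0)
        have hv0 : |V Δt 0| = |V0| := by rw [hV0]
        have h3 : |C0| * Δt ^ r ≤ |C0| :=
          mul_le_of_le_one_right (abs_nonneg _) hpow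
        linarith
    | succ m ih =>
      obtain ⟨C', hC'pos, hIH⟩ := ih
      set B : ℝ := (1 + K) ^ 2 + (1 + K) + 1 with hB
      have hB0 : 0 ≤ B := by positivity
      refine ⟨K * B * 2 * C' + 2 * C' + 1, by positivity, ?_⟩
      intro Δt hΔt hΔt1
      obtain ⟨hinc, hbnd⟩ := hIH Δt hΔt hΔt1
      have hpow : Δt ^ r ≤ 1 := pow_le_one₀ hΔt.le hΔt1.le
      have hpow0 : 0 < Δt ^ r := pow_pos hΔt r
      set e := η Δt (m + 2) with he
      set a := V Δt (m + 1) with ha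
      set b := V Δt m with hb
      have hrec' : V Δt (m + 2) = e ^ 3 * ((4 / 3) * a - (1 / 3) * b) :=
        hrec Δt hΔt m
      have he1 : |e - 1| ≤ K * Δt ^ r := hηK Δt hΔt (m + 2)
      have heK : |e - 1| ≤ K := he1.trans (mul_le_of_le_one_right hK0 hpow)
      have heabs : |e| ≤ 1 + K := by
        have := abs_sub_abs_le_abs_sub e 1
        simp only [abs_one] at this
        linarith
      have hcube : |e ^ 3 - 1| ≤ K * Δt ^ r * B := by
        have hfac : e ^ 3 - 1 = (e - 1) * (e ^ 2 + e + 1) := by ring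
        rw [hfac, abs_mul]
        have h2 : |e ^ 2 + e + 1| ≤ B := by
          have t1 : |e ^ 2 + e + 1| ≤ |e| ^ 2 + |e| + 1 := by
            calc |e ^ 2 + e + 1| ≤ |e ^ 2 + e| + |1| := abs_add_le _ _
              _ ≤ |e ^ 2| + |e| + |1| := by linarith [abs_add_le (e ^ 2) e]
              _ = |e| ^ 2 + |e| + 1 := by rw [abs_one, abs_pow]
          have t2 : |e| ^ 2 ≤ (1 + K) ^ 2 :=
            pow_le_pow_left₀ (abs_nonneg e) heabs 2
          linarith
        have := mul_le_mul he1 h2 (abs_nonneg _) (by positivity)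
        linarith
      have hD : V Δt (m + 2) - a =
          (e ^ 3 - 1) * (a + (a - b) / 3) + (a - b) / 3 := by
        rw [hrec']; ring
      have hC'dt : C' * Δt ^ r ≤ C' := mul_le_of_le_one_right hC'pos.le hpow
      have habs : |a + (a - b) / 3| ≤ 2 * C' := by
        have h4 := abs_add_le a ((a - b) / 3)
        have h3 : |(a - b) / 3| ≤ C' * Δt ^ r / 3 := by
          rw [abs_div, show |(3:ℝ)| = 3 by norm_num]
          linarith
        linarith
      have hDb : |V Δt (m + 2) - a| ≤ (K * B * 2 * C' + C') * Δt ^ r := by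
        rw [hD]
        calc |(e ^ 3 - 1) * (a + (a - b) / 3) + (a - b) / 3|
            ≤ |(e ^ 3 - 1) * (a + (a - b) / 3)| + |(a - b) / 3| := abs_add_le _ _
          _ = |e ^ 3 - 1| * |a + (a - b) / 3| + |a - b| / 3 := by
              rw [abs_mul, abs_div, show |(3:ℝ)| = 3 by norm_num]
          _ ≤ (K * Δt ^ r * B) * (2 * C') + (C' * Δt ^ r) / 3 := by
              have := mul_le_mul hcube habs (abs_nonneg _) (by positivity)
              linarith
          _ ≤ (K * B * 2 * C' + C') * Δt ^ r := by
              have h5 : K * Δt ^ r * B * (2 * C') = (K * B * 2 * C') * Δt ^ r := by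
                ring
              have h6 : 0 < C' * Δt ^ r := mul_pos hC'pos hpow0
              nlinarith
      constructor
      · refine hDb.trans (mul_le_mul_of_nonneg_right ?_ hpow0.le)
        linarith
      · have h7 : |V Δt (m + 2)| - |a| ≤ |V Δt (m + 2) - a| :=
          abs_sub_abs_le_abs_sub _ _
        have h8 : (K * B * 2 * C' + C') * Δt ^ r ≤ K * B * 2 * C' + C' :=
          mul_le_of_le_one_right (by positivity) hpow
        linarith
  obtain ⟨C', hC'pos, hM⟩ := main m
  exact ⟨C', hC'pos, 1, one_pos, fun Δt hΔt hΔt1 => (hM Δt hΔt hΔt1).1⟩
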